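/- Let k ≥ 0 and let g : ℂ × ℂ × ℝ^k → ℝ be continuously differentiable. For ε ∈ ℝ define φ_ε(z₀, z₁, x) = g(z₀, z₁, x) − log|z₀z₁ + ε|² on the open set {(z₀, z₁, x) : z₀z₁ + ε ≠ 0}. Suppose ε_m → 0 with ε_m ≠ 0, and (z₀^m, z₁^m, x^m) is a sequence with z₀^m z₁^m + ε_m ≠ 0 at which the Fréchet derivative of φ_{ε_m} vanishes, and (z₀^m, z₁^m, x^m) → (0, 0, x₀). Then the Fréchet derivative of the function x ↦ g(0, 0, x) vanishes at x₀. -/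

import Mathlib

open Filter Topology

lemma differentiable_normSq' : Differentiable ℝ Complex.normSq := by
  have : Complex.normSq = fun z : ℂ => z.re * z.re + z.im * z.im := by
    ext z; exact Complex.normSq_apply z
  rw [this]
  exact (Complex.reCLM.differentiable.mul Complex.reCLM.differentiable).add
    (Complex.imCLM.differentiable.mul Complex.imCLM.differentiable)

/-- A limit point on the singular set `{z₀ = z₁ = 0}` of critical points of
`φ_{ε_m} = g - log|z₀z₁ + ε_m|²` is a critical point of `x ↦ g(0,0,x)`. -/
theorem limit_of_critical_points_is_critical_on_singular_set
    (k : ℕ) (g : ℂ × ℂ × EuclideanSpace ℝ (Fin k) → ℝ) (hg : ContDiff ℝ 1 g)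
    (x₀ : EuclideanSpace ℝ (Fin k))
    (ε : ℕ → ℝ) (z₀ z₁ : ℕ → ℂ) (x : ℕ → EuclideanSpace ℝ (Fin k))
    (hε : Tendsto ε atTop (𝓝 0)) (hε' : ∀ m, ε m ≠ 0)
    (hne : ∀ m, z₀ m * z₁ m + (ε m : ℂ) ≠ 0)
    (hcrit : ∀ m, fderiv ℝ
        (fun p : ℂ × ℂ × EuclideanSpace ℝ (Fin k) =>
          g p - Real.log (Complex.normSq (p.1 * p.2.1 + (ε m : ℂ))))
        (z₀ m, z₁ m, x m) = 0)
    (hlim : Tendsto (fun m => ((z₀ m, z₁ m, x m) : ℂ × ℂ × EuclideanSpace ℝ (Fin k)))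
        atTop (𝓝 ((0 : ℂ), (0 : ℂ), x₀))) :
    fderiv ℝ (fun y : EuclideanSpace ℝ (Fin k) => g ((0 : ℂ), (0 : ℂ), y)) x₀ = 0 := by
  -- the linear inclusion y ↦ (0,0,y)
  set L : EuclideanSpace ℝ (Fin k) →L[ℝ] ℂ × ℂ × EuclideanSpace ℝ (Fin k) :=
    (0 : EuclideanSpace ℝ (Fin k) →L[ℝ] ℂ).prod
      ((0 : EuclideanSpace ℝ (Fin k) →L[ℝ] ℂ).prod
        (ContinuousLinearMap.id ℝ (EuclideanSpace ℝ (Fin k)))) with hLdef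
  have hL : HasFDerivAt (fun y : EuclideanSpace ℝ (Fin k) => g ((0 : ℂ), (0 : ℂ), y))
      ((fderiv ℝ g ((0 : ℂ), (0 : ℂ), x₀)).comp L) x₀ := by
    have hL0 : HasFDerivAt
        (fun y : EuclideanSpace ℝ (Fin k) =>
          (((0 : ℂ), (0 : ℂ), y) : ℂ × ℂ × EuclideanSpace ℝ (Fin k))) L x₀ :=
      HasFDerivAt.prodMk (hasFDerivAt_const _ _) (HasFDerivAt.prodMk (hasFDerivAt_const _ _) (hasFDerivAt_id _))
    exact ((hg.differentiable one_ne_zero _).hasFDerivAt).comp x₀ hL0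
  -- key: for each direction v, (fderiv g (0,0,x₀)) (0,0,v) = 0
  have key : ∀ v : EuclideanSpace ℝ (Fin k),
      fderiv ℝ g ((0 : ℂ), (0 : ℂ), x₀) (L v) = 0 := by
    intro v
    have hzero : ∀ m, fderiv ℝ g (z₀ m, z₁ m, x m) (L v) = 0 := by
      intro m
      -- the log term as composition through the projection π p = (p.1, p.2.1)
      set π : ℂ × ℂ × EuclideanSpace ℝ (Fin k) →L[ℝ] ℂ × ℂ :=
        (ContinuousLinearMap.fst ℝ ℂ (ℂ × EuclideanSpace ℝ (Fin k))).prod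
          ((ContinuousLinearMap.fst ℝ ℂ (EuclideanSpace ℝ (Fin k))).comp
            (ContinuousLinearMap.snd ℝ ℂ (ℂ × EuclideanSpace ℝ (Fin k)))) with hπ
      set F : ℂ × ℂ → ℝ := fun q => Real.log (Complex.normSq (q.1 * q.2 + (ε m : ℂ))) with hF
      have hinner : DifferentiableAt ℝ
          (fun q : ℂ × ℂ => Complex.normSq (q.1 * q.2 + (ε m : ℂ))) (z₀ m, z₁ m) :=
        (differentiable_normSq' _).comp _
          ((differentiableAt_fst.mul differentiableAt_snd).add (differentiableAt_const _))
      have hFd : DifferentiableAt ℝ F (z₀ m, z₁ m) :=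
        (Real.differentiableAt_log (by
          simpa [Complex.normSq_eq_zero] using hne m)).comp _ hinner
      have hπapp : ∀ p : ℂ × ℂ × EuclideanSpace ℝ (Fin k), π p = (p.1, p.2.1) := fun p => rfl
      have hh : HasFDerivAt
          (fun p : ℂ × ℂ × EuclideanSpace ℝ (Fin k) =>
            Real.log (Complex.normSq (p.1 * p.2.1 + (ε m : ℂ))))
          ((fderiv ℝ F (z₀ m, z₁ m)).comp π) (z₀ m, z₁ m, x m) := by
        have := hFd.hasFDerivAt.comp (z₀ m, z₁ m, x m)
          (π.hasFDerivAt (x := (z₀ m, z₁ m, x m)))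
        exact this
      have hgd : DifferentiableAt ℝ g (z₀ m, z₁ m, x m) := hg.differentiable one_ne_zero _
      have hsub := fderiv_fun_sub hgd hh.differentiableAt
      rw [hcrit m] at hsub
      have hgf : fderiv ℝ g (z₀ m, z₁ m, x m) =
          fderiv ℝ (fun p : ℂ × ℂ × EuclideanSpace ℝ (Fin k) =>
            Real.log (Complex.normSq (p.1 * p.2.1 + (ε m : ℂ)))) (z₀ m, z₁ m, x m) := by
        have := hsub.symm
        rwa [sub_eq_zero] at this
      rw [hgf, hh.fderiv]
      have hpi0 : π (L v) = 0 := rfl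
      simp [ContinuousLinearMap.comp_apply, hpi0]
    -- pass to the limit using continuity of fderiv g
    have hcont : Continuous (fderiv ℝ g) := hg.continuous_fderiv one_ne_zero
    have htends : Tendsto (fun m => fderiv ℝ g (z₀ m, z₁ m, x m) (L v)) atTop
        (𝓝 (fderiv ℝ g ((0 : ℂ), (0 : ℂ), x₀) (L v))) := by
      have h1 : Tendsto (fun m => fderiv ℝ g (z₀ m, z₁ m, x m)) atTop
          (𝓝 (fderiv ℝ g ((0 : ℂ), (0 : ℂ), x₀))) := (hcont.tendsto _).comp hlim
      exact ((ContinuousLinearMap.apply ℝ ℝ (L v)).continuous.tendsto _).comp h1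
    have hconst : Tendsto (fun _ : ℕ => (0 : ℝ)) atTop
        (𝓝 (fderiv ℝ g ((0 : ℂ), (0 : ℂ), x₀) (L v))) := by
      simpa [hzero] using htends
    exact tendsto_nhds_unique hconst tendsto_const_nhds
  rw [hL.fderiv]
  ext v
  simpa using key v
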